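/- Define Q(s) = ∫_ℝ dX / ((X² + 1)^{3/2} ((X - s)² + 1)^{3/2}) for s ∈ ℝ. Then there exists C > 0 such that Q(s) ≤ C / (1 + |s|³) for all s ∈ ℝ. -/

import Mathlib

open MeasureTheory

theorem stmt_4 :
    ∃ C > 0, ∀ s : ℝ,
      (∫ X : ℝ, 1 / ((X^2 + 1) ^ ((3:ℝ)/2) * ((X - s)^2 + 1) ^ ((3:ℝ)/2)))
        ≤ C / (1 + |s|^3) := by
  refine ⟨2 * Real.pi * 8 ^ ((3:ℝ)/2), by positivity, fun s => ?_⟩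
  have hMpos : (0:ℝ) < (1 + s^2/4) ^ ((3:ℝ)/2) := by positivity
  set c : ℝ := ((1 + s^2/4) ^ ((3:ℝ)/2))⁻¹ with hc
  have hcpos : 0 < c := by positivity
  -- integrable dominating function
  have hg1 : Integrable (fun X : ℝ => 1 / (1 + X^2)) := by
    simpa [one_div] using integrable_inv_one_add_sq
  have hg2 : Integrable (fun X : ℝ => 1 / (1 + (X - s)^2)) := by
    have := hg1.comp_sub_right s
    simpa using this
  have hgsum : Integrable (fun X : ℝ => c * (1 / (1 + X^2) + 1 / (1 + (X - s)^2))) :=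
    (hg1.add hg2).const_mul c
  -- pointwise bound
  have hpt : ∀ X : ℝ,
      1 / ((X^2 + 1) ^ ((3:ℝ)/2) * ((X - s)^2 + 1) ^ ((3:ℝ)/2))
        ≤ c * (1 / (1 + X^2) + 1 / (1 + (X - s)^2)) := by
    intro X
    set A : ℝ := X^2 + 1 with hA
    set B : ℝ := (X - s)^2 + 1 with hB
    have hA1 : (1:ℝ) ≤ A := by nlinarith [sq_nonneg X]
    have hB1 : (1:ℝ) ≤ B := by nlinarith [sq_nonneg (X - s)]
    have hArp : A ≤ A ^ ((3:ℝ)/2) := by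
      calc A = A ^ (1:ℝ) := (Real.rpow_one A).symm
      _ ≤ A ^ ((3:ℝ)/2) := Real.rpow_le_rpow_of_exponent_le hA1 (by norm_num)
    have hBrp : B ≤ B ^ ((3:ℝ)/2) := by
      calc B = B ^ (1:ℝ) := (Real.rpow_one B).symm
      _ ≤ B ^ ((3:ℝ)/2) := Real.rpow_le_rpow_of_exponent_le hB1 (by norm_num)
    rcases le_total A B with hAB | hAB
    · -- B is the large one : B ≥ 1 + s^2/4
      have hBM : 1 + s^2/4 ≤ B := by nlinarith [sq_nonneg (2*X - s)]
      have hBrp2 : (1 + s^2/4) ^ ((3:ℝ)/2) ≤ B ^ ((3:ℝ)/2) :=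
        Real.rpow_le_rpow (by positivity) hBM (by norm_num)
      have hprod : A * (1 + s^2/4) ^ ((3:ℝ)/2) ≤ A ^ ((3:ℝ)/2) * B ^ ((3:ℝ)/2) := by
        have := mul_le_mul hArp hBrp2 (by positivity) (by positivity)
        linarith
      have h1 : 1 / (A ^ ((3:ℝ)/2) * B ^ ((3:ℝ)/2)) ≤ 1 / (A * (1 + s^2/4) ^ ((3:ℝ)/2)) :=
        one_div_le_one_div_of_le (by positivity) hprod
      have h2 : 1 / (A * (1 + s^2/4) ^ ((3:ℝ)/2)) = c * (1 / A) := by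
        rw [hc]; simp only [one_div, mul_inv]; exact mul_comm _ _
      have h3 : c * (1 / A) ≤ c * (1 / (1 + X^2) + 1 / (1 + (X - s)^2)) := by
        have hApos : (0:ℝ) < A := by linarith
        have hBpos : (0:ℝ) < B := by linarith
        have : (1:ℝ) / A ≤ 1 / (1 + X^2) + 1 / (1 + (X - s)^2) := by
          have e1 : (1:ℝ) + X^2 = A := by rw [hA]; ring
          have e2 : (1:ℝ) + (X - s)^2 = B := by rw [hB]; ring
          rw [e1, e2]
          have : (0:ℝ) < 1 / B := by positivity
          linarith
        exact mul_le_mul_of_nonneg_left this hcpos.le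
      calc 1 / (A ^ ((3:ℝ)/2) * B ^ ((3:ℝ)/2)) ≤ 1 / (A * (1 + s^2/4) ^ ((3:ℝ)/2)) := h1
      _ = c * (1 / A) := h2
      _ ≤ _ := h3
    · -- A is the large one
      have hAM : 1 + s^2/4 ≤ A := by nlinarith [sq_nonneg (2*X - s)]
      have hArp2 : (1 + s^2/4) ^ ((3:ℝ)/2) ≤ A ^ ((3:ℝ)/2) :=
        Real.rpow_le_rpow (by positivity) hAM (by norm_num)
      have hprod : (1 + s^2/4) ^ ((3:ℝ)/2) * B ≤ A ^ ((3:ℝ)/2) * B ^ ((3:ℝ)/2) :=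
        mul_le_mul hArp2 hBrp (by positivity) (by positivity)
      have h1 : 1 / (A ^ ((3:ℝ)/2) * B ^ ((3:ℝ)/2)) ≤ 1 / ((1 + s^2/4) ^ ((3:ℝ)/2) * B) :=
        one_div_le_one_div_of_le (by positivity) hprod
      have h2 : 1 / ((1 + s^2/4) ^ ((3:ℝ)/2) * B) = c * (1 / B) := by
        rw [hc]; simp only [one_div, mul_inv]
      have h3 : c * (1 / B) ≤ c * (1 / (1 + X^2) + 1 / (1 + (X - s)^2)) := by
        have hApos : (0:ℝ) < A := by linarith
        have : (1:ℝ) / B ≤ 1 / (1 + X^2) + 1 / (1 + (X - s)^2) := by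
          have e1 : (1:ℝ) + X^2 = A := by rw [hA]; ring
          have e2 : (1:ℝ) + (X - s)^2 = B := by rw [hB]; ring
          rw [e1, e2]
          have : (0:ℝ) < 1 / A := by positivity
          linarith
        exact mul_le_mul_of_nonneg_left this hcpos.le
      calc 1 / (A ^ ((3:ℝ)/2) * B ^ ((3:ℝ)/2)) ≤ 1 / ((1 + s^2/4) ^ ((3:ℝ)/2) * B) := h1
      _ = c * (1 / B) := h2
      _ ≤ _ := h3
  -- integral bound
  have hint : (∫ X : ℝ, 1 / ((X^2 + 1) ^ ((3:ℝ)/2) * ((X - s)^2 + 1) ^ ((3:ℝ)/2)))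
      ≤ ∫ X : ℝ, c * (1 / (1 + X^2) + 1 / (1 + (X - s)^2)) := by
    apply integral_mono_of_nonneg
    · filter_upwards with X
      positivity
    · exact hgsum
    · filter_upwards with X
      exact hpt X
  have hval : (∫ X : ℝ, c * (1 / (1 + X^2) + 1 / (1 + (X - s)^2)))
      = c * (2 * Real.pi) := by
    rw [integral_const_mul, integral_add hg1 hg2]
    have e1 : (∫ X : ℝ, 1 / (1 + X^2)) = Real.pi := by
      simp only [one_div]; exact integral_univ_inv_one_add_sq
    have e2 : (∫ X : ℝ, 1 / (1 + (X - s)^2)) = Real.pi := by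
      rw [integral_sub_right_eq_self (fun X => 1 / (1 + X^2)) s]
      simp only [one_div]; exact integral_univ_inv_one_add_sq
    rw [e1, e2]; ring
  -- final comparison
  have hkey : 1 + |s|^3 ≤ (8:ℝ) ^ ((3:ℝ)/2) * (1 + s^2/4) ^ ((3:ℝ)/2) := by
    have hcomb : (8:ℝ) ^ ((3:ℝ)/2) * (1 + s^2/4) ^ ((3:ℝ)/2) = (8 + 2*s^2) ^ ((3:ℝ)/2) := by
      rw [← Real.mul_rpow (by norm_num) (by positivity)]
      ring_nf
    rw [hcomb]
    have h1 : ((1 + |s|)^2 : ℝ) ≤ 8 + 2*s^2 := by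
      nlinarith [sq_nonneg (|s| - 1), sq_abs s, abs_nonneg s]
    have h2 : (((1 + |s|)^2 : ℝ)) ^ ((3:ℝ)/2) ≤ (8 + 2*s^2) ^ ((3:ℝ)/2) :=
      Real.rpow_le_rpow (by positivity) h1 (by norm_num)
    have h3 : (((1 + |s|)^2 : ℝ)) ^ ((3:ℝ)/2) = (1 + |s|)^3 := by
      rw [← Real.rpow_natCast (1 + |s|) 2, ← Real.rpow_mul (by positivity)]
      norm_num
    have h4 : 1 + |s|^3 ≤ (1 + |s|)^3 := by nlinarith [abs_nonneg s, sq_nonneg (|s|)]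
    calc (1:ℝ) + |s|^3 ≤ (1 + |s|)^3 := h4
    _ = (((1 + |s|)^2 : ℝ)) ^ ((3:ℝ)/2) := h3.symm
    _ ≤ _ := h2
  have hfin : c * (2 * Real.pi) ≤ 2 * Real.pi * 8 ^ ((3:ℝ)/2) / (1 + |s|^3) := by
    rw [hc, le_div_iff₀ (by positivity : (0:ℝ) < 1 + |s|^3)]
    calc ((1 + s^2/4) ^ ((3:ℝ)/2))⁻¹ * (2 * Real.pi) * (1 + |s|^3)
        ≤ ((1 + s^2/4) ^ ((3:ℝ)/2))⁻¹ * (2 * Real.pi) * ((8:ℝ) ^ ((3:ℝ)/2) * (1 + s^2/4) ^ ((3:ℝ)/2)) := by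
          apply mul_le_mul_of_nonneg_left hkey
          positivity
    _ = 2 * Real.pi * 8 ^ ((3:ℝ)/2) * (((1 + s^2/4) ^ ((3:ℝ)/2))⁻¹ * (1 + s^2/4) ^ ((3:ℝ)/2)) := by
          ring
    _ = 2 * Real.pi * 8 ^ ((3:ℝ)/2) := by
          rw [inv_mul_cancel₀ hMpos.ne', mul_one]
  calc _ ≤ ∫ X : ℝ, c * (1 / (1 + X^2) + 1 / (1 + (X - s)^2)) := hint
  _ = c * (2 * Real.pi) := hval
  _ ≤ _ := hfin
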